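/- Let 0 < ε < 1 and let g₀ > 0 be the unique positive real satisfying g₀·Q(g₀/√(2π)) = (1 − ε)·exp(−g₀²/(4π)). Suppose g ≥ g₀ and q > 0 satisfies g·exp(q²/2)·Q(q) = 1 − ε. Then g/√(2π) ≤ q ≤ g/((1 − ε)·√(2π)). -/

import Mathlib

open MeasureTheory Real

/-- The standard Gaussian tail probability `Q x = (1/√(2π)) ∫ₓ^∞ exp(-u²/2) du`. -/
noncomputable def Q (x : ℝ) : ℝ :=
  (Real.sqrt (2 * π))⁻¹ * ∫ u in Set.Ioi x, Real.exp (-u^2/2)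

namespace StmtAux

open Set Filter

noncomputable def Ig (x : ℝ) : ℝ := ∫ u in Set.Ioi x, Real.exp (-u^2/2)

lemma Q_eq (x : ℝ) : Q x = (Real.sqrt (2 * π))⁻¹ * Ig x := rfl

lemma cont_e : Continuous (fun u : ℝ => Real.exp (-u^2/2)) := by fun_prop

lemma int_e (x : ℝ) : IntegrableOn (fun u : ℝ => Real.exp (-u^2/2)) (Set.Ioi x) := by
  have h : (fun u : ℝ => Real.exp (-u^2/2)) = fun u => Real.exp (-(1/2)*u^2) := by
    funext u; ring_nf
  rw [h]
  exact (integrable_exp_neg_mul_sq (by norm_num : (0:ℝ) < 1/2)).integrableOn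

lemma tend_e : Tendsto (fun u : ℝ => Real.exp (-u^2/2)) atTop (nhds 0) := by
  apply Real.tendsto_exp_atBot.comp
  have h : Tendsto (fun u : ℝ => u^2) atTop atTop := tendsto_pow_atTop (by norm_num)
  have h2 : Tendsto (fun u : ℝ => -(u^2)) atTop atBot := tendsto_neg_atBot_iff.2 h
  exact (h2.atBot_div_const (by norm_num : (0:ℝ) < 2)).congr (by intro u; ring)

lemma dhalf (u : ℝ) : HasDerivAt (fun v : ℝ => -v^2/2) (-u) u := by
  have := ((hasDerivAt_pow 2 u).neg).div_const 2
  exact this.congr_deriv (by norm_num; ring)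

lemma dexp (u : ℝ) : HasDerivAt (fun v : ℝ => Real.exp (-v^2/2)) (-u * Real.exp (-u^2/2)) u := by
  have := (dhalf u).exp
  convert this using 1; ring

lemma dneg (u : ℝ) : HasDerivAt (fun v : ℝ => -Real.exp (-v^2/2)) (u * Real.exp (-u^2/2)) u := by
  have := (dexp u).neg
  exact this.congr_deriv (by ring)

lemma Ig_pos (x : ℝ) : 0 < Ig x := by
  rw [Ig, setIntegral_pos_iff_support_of_nonneg_ae]
  · have hs : (Function.support fun u : ℝ => Real.exp (-u^2/2)) = Set.univ := by
      ext u; simp [Real.exp_ne_zero]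
    rw [hs, Set.univ_inter, Real.volume_Ioi]
    exact ENNReal.zero_lt_top
  · exact Filter.Eventually.of_forall fun u => (Real.exp_pos _).le
  · exact int_e x

lemma Ig_deriv (x : ℝ) : HasDerivAt Ig (-Real.exp (-x^2/2)) x := by
  set a := x - 1 with ha
  have hsplit : ∀ y ∈ Set.Ioi a, Ig y = Ig a - ∫ u in a..y, Real.exp (-u^2/2) := by
    intro y hy
    have hle : a ≤ y := le_of_lt hy
    rw [intervalIntegral.integral_of_le hle]
    have hunion : Set.Ioc a y ∪ Set.Ioi y = Set.Ioi a := Set.Ioc_union_Ioi_eq_Ioi hle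
    have hdisj : Disjoint (Set.Ioc a y) (Set.Ioi y) := Set.Ioc_disjoint_Ioi le_rfl
    have := setIntegral_union hdisj measurableSet_Ioi
      ((int_e a).mono_set (by intro u hu; exact hu.1)) (int_e y)
    rw [hunion] at this
    simp only [Ig]; rw [this]; ring
  have hD : HasDerivAt (fun y => Ig a - ∫ u in a..y, Real.exp (-u^2/2))
      (-Real.exp (-x^2/2)) x := by
    have h1 : HasDerivAt (fun y => ∫ u in a..y, Real.exp (-u^2/2)) (Real.exp (-x^2/2)) x :=
      intervalIntegral.integral_hasDerivAt_right (cont_e.intervalIntegrable a x)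
        (cont_e.stronglyMeasurableAtFilter _ _) cont_e.continuousAt
    exact ((hasDerivAt_const x (Ig a)).sub h1).congr_deriv (by ring)
  exact hD.congr_of_eventuallyEq (by
    filter_upwards [Ioi_mem_nhds (by linarith : a < x)] with y hy using hsplit y hy)

lemma Ig_cont : Continuous Ig :=
  continuous_iff_continuousAt.2 fun x => (Ig_deriv x).continuousAt

lemma moment (x : ℝ) (hx : 0 < x) :
    IntegrableOn (fun u : ℝ => u * Real.exp (-u^2/2)) (Set.Ioi x) ∧
    ∫ u in Set.Ioi x, u * Real.exp (-u^2/2) = Real.exp (-x^2/2) := by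
  have hderiv : ∀ u ∈ Set.Ici x, HasDerivAt (fun v : ℝ => -Real.exp (-v^2/2))
      (u * Real.exp (-u^2/2)) u := fun u _ => dneg u
  have hpos : ∀ u ∈ Set.Ioi x, 0 ≤ u * Real.exp (-u^2/2) := fun u hu =>
    mul_nonneg (le_of_lt (hx.trans hu)) (Real.exp_pos _).le
  have htend : Tendsto (fun v : ℝ => -Real.exp (-v^2/2)) atTop (nhds 0) := by
    simpa using tend_e.neg
  refine ⟨integrableOn_Ioi_deriv_of_nonneg' hderiv hpos htend, ?_⟩
  have := integral_Ioi_of_hasDerivAt_of_nonneg' hderiv hpos htend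
  simpa using this

lemma mills (x : ℝ) (hx : 0 < x) : x * Ig x < Real.exp (-x^2/2) := by
  obtain ⟨hint, hval⟩ := moment x hx
  have hsub : (fun u : ℝ => (u - x) * Real.exp (-u^2/2))
      = fun u => u * Real.exp (-u^2/2) - x * Real.exp (-u^2/2) := by funext u; ring
  have hdiff : IntegrableOn (fun u : ℝ => (u - x) * Real.exp (-u^2/2)) (Set.Ioi x) := by
    rw [hsub]; exact hint.sub ((int_e x).const_mul x)
  have hpos : 0 < ∫ u in Set.Ioi x, (u - x) * Real.exp (-u^2/2) := by
    rw [setIntegral_pos_iff_support_of_nonneg_ae]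
    · refine lt_of_lt_of_le ?_ (measure_mono (fun u hu => ⟨?_, hu⟩))
      · rw [Real.volume_Ioi]; exact ENNReal.zero_lt_top
      · exact mul_ne_zero (by simp only [Set.mem_Ioi] at hu; intro h; linarith [sub_eq_zero.1 h])
          (Real.exp_ne_zero _)
    · filter_upwards [ae_restrict_mem measurableSet_Ioi] with u hu
      exact mul_nonneg (by simp only [Set.mem_Ioi] at hu; linarith) (Real.exp_pos _).le
    · exact hdiff
  have hcalc : ∫ u in Set.Ioi x, (u - x) * Real.exp (-u^2/2)
      = Real.exp (-x^2/2) - x * Ig x := by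
    rw [hsub, integral_sub hint ((int_e x).const_mul x), hval, MeasureTheory.integral_const_mul]
    rfl
  rw [hcalc] at hpos; linarith

noncomputable def p (u : ℝ) : ℝ := (u^4 + 2*u^2 - 1)/(1 + u^2)^2 * Real.exp (-u^2/2)

lemma cont_p : Continuous p := by
  apply Continuous.mul _ cont_e
  exact Continuous.div (by fun_prop) (by fun_prop) (fun u => by positivity)

lemma dp (u : ℝ) : HasDerivAt (fun v : ℝ => -(v/(1+v^2) * Real.exp (-v^2/2))) (p u) u := by
  have h0 : (0:ℝ) < 1 + u^2 := by positivity
  have hq : HasDerivAt (fun v : ℝ => v/(1+v^2)) ((1 - u^2)/(1+u^2)^2) u := by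
    have := (hasDerivAt_id u).div ((hasDerivAt_const u (1:ℝ)).add (hasDerivAt_pow 2 u)) (ne_of_gt h0)
    exact this.congr_deriv (by norm_num; ring)
  have := (hq.mul (dexp u)).neg
  exact this.congr_deriv (by unfold p; field_simp; ring)

lemma p_bound (u : ℝ) : |(u^4 + 2*u^2 - 1)/(1 + u^2)^2| ≤ 1 := by
  rw [abs_div, div_le_one (by positivity)]
  rw [abs_of_pos (by positivity : (0:ℝ) < (1+u^2)^2)]
  rw [abs_le]
  constructor <;> nlinarith [sq_nonneg u, sq_nonneg (u^2)]

lemma int_p (x : ℝ) : IntegrableOn p (Set.Ioi x) := by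
  refine Integrable.mono (int_e x) cont_p.aestronglyMeasurable.restrict ?_
  refine Filter.Eventually.of_forall fun u => ?_
  simp only [p, norm_mul, Real.norm_eq_abs, Real.abs_exp]
  calc |(u^4 + 2*u^2 - 1)/(1 + u^2)^2| * Real.exp (-u^2/2)
      ≤ 1 * Real.exp (-u^2/2) := by
        exact mul_le_mul_of_nonneg_right (p_bound u) (Real.exp_pos _).le
    _ = Real.exp (-u^2/2) := one_mul _

lemma tend_h : Tendsto (fun v : ℝ => -(v/(1+v^2) * Real.exp (-v^2/2))) atTop (nhds 0) := by
  have h : Tendsto (fun v : ℝ => v/(1+v^2) * Real.exp (-v^2/2)) atTop (nhds 0) := by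
    apply tendsto_of_tendsto_of_tendsto_of_le_of_le' tendsto_const_nhds tend_e
    · filter_upwards [eventually_ge_atTop (0:ℝ)] with v hv
      positivity
    · filter_upwards [eventually_ge_atTop (0:ℝ)] with v hv
      have h1 : v/(1+v^2) ≤ 1 := by
        rw [div_le_one (by positivity)]; nlinarith
      nlinarith [Real.exp_pos (-v^2/2), mul_le_mul_of_nonneg_right h1 (Real.exp_pos (-v^2/2)).le]
  simpa using h.neg

lemma integral_p (x : ℝ) : ∫ u in Set.Ioi x, p u = x/(1+x^2) * Real.exp (-x^2/2) := by
  have := integral_Ioi_of_hasDerivAt_of_tendsto' (fun u _ => dp u) (int_p x) tend_h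
  simpa using this

lemma lower (x : ℝ) (hx : 0 < x) : x/(1+x^2) * Real.exp (-x^2/2) ≤ Ig x := by
  have h : 0 ≤ ∫ u in Set.Ioi x, (Real.exp (-u^2/2) - p u) := by
    refine setIntegral_nonneg measurableSet_Ioi fun u _ => ?_
    have hb := p_bound u
    have : p u ≤ Real.exp (-u^2/2) := by
      calc p u ≤ |p u| := le_abs_self _
        _ = |(u^4 + 2*u^2 - 1)/(1 + u^2)^2| * Real.exp (-u^2/2) := by
            rw [p, abs_mul, Real.abs_exp]
        _ ≤ 1 * Real.exp (-u^2/2) :=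
            mul_le_mul_of_nonneg_right hb (Real.exp_pos _).le
        _ = Real.exp (-u^2/2) := one_mul _
    linarith
  rw [integral_sub (int_e x) (int_p x), integral_p x] at h
  have : (∫ u in Set.Ioi x, Real.exp (-u^2/2)) = Ig x := rfl
  rw [this] at h; linarith

noncomputable def F (x : ℝ) : ℝ := Real.exp (x^2/2) * Ig x

lemma dF (x : ℝ) : HasDerivAt F (Real.exp (x^2/2) * (x * Ig x) - 1) x := by
  have h1 : HasDerivAt (fun v : ℝ => Real.exp (v^2/2)) (x * Real.exp (x^2/2)) x := by
    have h0 : HasDerivAt (fun v : ℝ => v^2/2) x x := by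
      have := (hasDerivAt_pow 2 x).div_const 2
      exact this.congr_deriv (by norm_num)
    have := h0.exp
    convert this using 1; ring
  have := h1.mul (Ig_deriv x)
  refine this.congr_deriv ?_
  have hE : Real.exp (x^2/2) * Real.exp (-x^2/2) = 1 := by
    have h : x^2/2 + -x^2/2 = 0 := by ring
    rw [← Real.exp_add, h, Real.exp_zero]
  nlinarith [hE]

lemma F_anti : StrictAntiOn F (Set.Ici 0) := by
  apply strictAntiOn_of_deriv_neg (convex_Ici 0)
  · exact Continuous.continuousOn (continuous_iff_continuousAt.2 fun x => (dF x).continuousAt)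
  · intro x hx
    rw [interior_Ici] at hx
    rw [(dF x).deriv]
    have hm := mills x hx
    have hE : Real.exp (x^2/2) * Real.exp (-x^2/2) = 1 := by
      have h : x^2/2 + -x^2/2 = 0 := by ring
      rw [← Real.exp_add, h, Real.exp_zero]
    nlinarith [Real.exp_pos (x^2/2), mul_lt_mul_of_pos_left hm (Real.exp_pos (x^2/2))]

end StmtAux

open StmtAux in
theorem stmt_12 (ε g₀ g q : ℝ) (hε0 : 0 < ε) (hε1 : ε < 1) (hg₀ : 0 < g₀)
    (hg₀eq : g₀ * Q (g₀ / Real.sqrt (2*π)) = (1 - ε) * Real.exp (-g₀^2/(4*π)))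
    (hg₀uniq : ∀ g' : ℝ, 0 < g' →
      g' * Q (g' / Real.sqrt (2*π)) = (1 - ε) * Real.exp (-g'^2/(4*π)) → g' = g₀)
    (hg : g₀ ≤ g) (hq : 0 < q)
    (heq : g * Real.exp (q^2/2) * Q q = 1 - ε) :
    g / Real.sqrt (2*π) ≤ q ∧ q ≤ g / ((1 - ε) * Real.sqrt (2*π)) := by
  have hπ : 0 < π := Real.pi_pos
  have hs : 0 < Real.sqrt (2*π) := Real.sqrt_pos.2 (by positivity)
  have hs2 : Real.sqrt (2*π)^2 = 2*π := Real.sq_sqrt (by positivity)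
  have h1ε : 0 < 1 - ε := by linarith
  have hgpos : 0 < g := lt_of_lt_of_le hg₀ hg
  have hinv : (Real.sqrt (2*π))⁻¹ * Real.sqrt (2*π) = 1 := inv_mul_cancel₀ hs.ne'
  have heq2 : g * Real.exp (q^2/2) * Ig q = (1-ε) * Real.sqrt (2*π) := by
    rw [Q_eq] at heq
    calc g * Real.exp (q^2/2) * Ig q
        = g * Real.exp (q^2/2) * (((Real.sqrt (2*π))⁻¹ * Real.sqrt (2*π)) * Ig q) := by
          rw [hinv, one_mul]
      _ = (g * Real.exp (q^2/2) * ((Real.sqrt (2*π))⁻¹ * Ig q)) * Real.sqrt (2*π) := by ring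
      _ = (1-ε) * Real.sqrt (2*π) := by rw [heq]
  have hEq : Real.exp (q^2/2) * Real.exp (-q^2/2) = 1 := by
    have h : q^2/2 + -q^2/2 = 0 := by ring
    rw [← Real.exp_add, h, Real.exp_zero]
  -- Upper bound
  have hupper : q ≤ g / ((1 - ε) * Real.sqrt (2*π)) := by
    rw [le_div_iff₀ (by positivity)]
    have h3 : Real.exp (q^2/2) * (q * Ig q) < 1 := by
      calc Real.exp (q^2/2) * (q * Ig q)
          < Real.exp (q^2/2) * Real.exp (-q^2/2) :=
            mul_lt_mul_of_pos_left (mills q hq) (Real.exp_pos _)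
        _ = 1 := hEq
    calc q * ((1-ε) * Real.sqrt (2*π)) = g * (Real.exp (q^2/2) * (q * Ig q)) := by
          rw [← heq2]; ring
      _ ≤ g * 1 := mul_le_mul_of_nonneg_left h3.le hgpos.le
      _ = g := mul_one g
  -- Key squared identity
  have keysq : ∀ t : ℝ, (t/Real.sqrt (2*π))^2/2 = t^2/(4*π) := by
    intro t; rw [div_pow, hs2]; ring
  set H : ℝ → ℝ := fun t => t * ((Real.sqrt (2*π))⁻¹ * Ig (t/Real.sqrt (2*π)))
      - (1-ε)*Real.exp (-t^2/(4*π)) with hH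
  have contH : Continuous H := by
    apply Continuous.sub
    · exact continuous_id.mul (continuous_const.mul (Ig_cont.comp (continuous_id.div_const _)))
    · exact continuous_const.mul
        (Real.continuous_exp.comp (((continuous_pow 2).neg).div_const (4*π)))
  have hHg₀ : H g₀ = 0 := by
    simp only [hH, ← Q_eq]
    rw [hg₀eq]; ring
  have hA : 0 ≤ H g := by
    by_contra hneg
    push_neg at hneg
    set T := max g (Real.sqrt (2*π) * (Real.sqrt ((1-ε)/ε) + 1)) with hT
    have hTg : g ≤ T := le_max_left _ _
    have hx1 : Real.sqrt ((1-ε)/ε) + 1 ≤ T / Real.sqrt (2*π) := by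
      rw [le_div_iff₀ hs]
      calc (Real.sqrt ((1-ε)/ε) + 1) * Real.sqrt (2*π)
          = Real.sqrt (2*π) * (Real.sqrt ((1-ε)/ε) + 1) := by ring
        _ ≤ T := le_max_right _ _
    set x := T / Real.sqrt (2*π) with hxdef
    have hxpos : 0 < x := lt_of_lt_of_le (by positivity) hx1
    have hxx : (1-ε)/ε < x^2 := by
      nlinarith [Real.sq_sqrt (le_of_lt (div_pos h1ε hε0)), Real.sqrt_nonneg ((1-ε)/ε)]
    have hfrac : (1-ε) * (1 + x^2) < x^2 := by
      rw [div_lt_iff₀ hε0] at hxx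
      nlinarith
    have hHT : 0 < H T := by
      have hl := lower x hxpos
      have hexp : Real.exp (-T^2/(4*π)) = Real.exp (-x^2/2) := by
        refine congrArg Real.exp ?_
        rw [hxdef]; linear_combination keysq T
      simp only [hH]
      rw [← hxdef, hexp]
      have h6 : (1-ε) * Real.exp (-x^2/2) < x^2/(1+x^2) * Real.exp (-x^2/2) := by
        apply mul_lt_mul_of_pos_right _ (Real.exp_pos _)
        rw [lt_div_iff₀ (by positivity)]; linarith
      have h7 := mul_le_mul_of_nonneg_left hl hxpos.le
      have h8 : x * (x/(1+x^2) * Real.exp (-x^2/2)) = x^2/(1+x^2) * Real.exp (-x^2/2) := by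
        field_simp
      have h9 : T * ((Real.sqrt (2*π))⁻¹ * Ig x) = x * Ig x := by
        rw [hxdef]; field_simp
      rw [h9]
      linarith
    obtain ⟨c, hcmem, hc0⟩ := intermediate_value_Icc hTg contH.continuousOn
      (Set.mem_Icc.2 ⟨hneg.le, hHT.le⟩)
    have hcpos : 0 < c := lt_of_lt_of_le hgpos hcmem.1
    have hceq : c * Q (c / Real.sqrt (2*π)) = (1-ε) * Real.exp (-c^2/(4*π)) := by
      simp only [hH] at hc0
      rw [Q_eq]
      linear_combination hc0
    have hcg₀ : c = g₀ := hg₀uniq c hcpos hceq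
    have hgg₀ : g = g₀ := le_antisymm (hcg₀ ▸ hcmem.1) hg
    rw [hgg₀, hHg₀] at hneg
    exact lt_irrefl 0 hneg
  have hA' : 0 ≤ g * ((Real.sqrt (2*π))⁻¹ * Ig (g/Real.sqrt (2*π)))
      - (1-ε)*Real.exp (-g^2/(4*π)) := by
    simpa [hH] using hA
  set x₀ := g / Real.sqrt (2*π) with hx₀def
  have hx₀pos : 0 < x₀ := div_pos hgpos hs
  have hexp0 : Real.exp (-g^2/(4*π)) = Real.exp (-x₀^2/2) := by
    refine congrArg Real.exp ?_
    rw [hx₀def]; linear_combination keysq g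
  have hE0 : Real.exp (x₀^2/2) * Real.exp (-x₀^2/2) = 1 := by
    have h : x₀^2/2 + -x₀^2/2 = 0 := by ring
    rw [← Real.exp_add, h, Real.exp_zero]
  have hA2 : (1-ε) * Real.sqrt (2*π) ≤ g * Real.exp (x₀^2/2) * Ig x₀ := by
    rw [hexp0] at hA'
    have hA'' : (1-ε) * Real.exp (-x₀^2/2) ≤ g * ((Real.sqrt (2*π))⁻¹ * Ig x₀) := by linarith
    have h12 := mul_le_mul_of_nonneg_left hA''
      (show (0:ℝ) ≤ Real.sqrt (2*π) * Real.exp (x₀^2/2) by positivity)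
    have h10 : (Real.sqrt (2*π) * Real.exp (x₀^2/2)) * ((1-ε) * Real.exp (-x₀^2/2))
        = (1-ε) * Real.sqrt (2*π) := by
      have h : (Real.sqrt (2*π) * Real.exp (x₀^2/2)) * ((1-ε) * Real.exp (-x₀^2/2))
          = (1-ε) * Real.sqrt (2*π) * (Real.exp (x₀^2/2) * Real.exp (-x₀^2/2)) := by ring
      rw [h, hE0, mul_one]
    have h11 : (Real.sqrt (2*π) * Real.exp (x₀^2/2)) * (g * ((Real.sqrt (2*π))⁻¹ * Ig x₀))
        = g * Real.exp (x₀^2/2) * Ig x₀ := by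
      have h : (Real.sqrt (2*π) * Real.exp (x₀^2/2)) * (g * ((Real.sqrt (2*π))⁻¹ * Ig x₀))
          = (Real.sqrt (2*π) * (Real.sqrt (2*π))⁻¹) * (g * Real.exp (x₀^2/2) * Ig x₀) := by ring
      rw [h, mul_inv_cancel₀ hs.ne', one_mul]
    rw [h10, h11] at h12
    exact h12
  have hlow : x₀ ≤ q := by
    by_contra hlt
    push_neg at hlt
    have hFq : F x₀ < F q := F_anti (Set.mem_Ici.2 hq.le) (Set.mem_Ici.2 hx₀pos.le) hlt
    have e1 : g * F q = (1-ε) * Real.sqrt (2*π) := by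
      simp only [F, ← mul_assoc]; exact heq2
    have e2 : (1-ε) * Real.sqrt (2*π) ≤ g * F x₀ := by
      simp only [F, ← mul_assoc]; exact hA2
    linarith [mul_lt_mul_of_pos_left hFq hgpos]
  exact ⟨hlow, hupper⟩
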